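/- Suppose f(r,t) and f_r′(r,t) are nonnegative and monotone increasing in (r,t), r ↦ f(r,t) is convex for each t, and the operator condition (E′) holds: ‖F_u(u,t) − A∘ev_t‖ ≤ f_r′(r,t) (operator norm) whenever ‖u(s)‖ ≤ r for all s. Then for 0 ≤ r₁ ≤ r₂ and continuous functions u₁, u₂ with ‖u_i(t)‖ ≤ r_i (i = 1,2) and ‖u₂(t) − u₁(t)‖ ≤ r₂ − r₁ for all t ∈ [0,T⁺], the map L(u)(t) = u(t) − A⁻¹(F(u,t)) satisfies ‖L(u₂)(t) − L(u₁)(t)‖ ≤ ‖A⁻¹‖·(f(r₂,t) − f(r₁,t)) for all t ∈ [0,T⁺]. -/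

import Mathlib

/-- (Sidorov–Sidorov, after Lemma 5.1 of Grebenikov–Ryabov). Under condition (E′)
and the monotonicity/convexity assumptions on the Lyapunov majorant `f`, if
`‖u_i(t)‖ ≤ r_i` and `‖u₂(t) − u₁(t)‖ ≤ r₂ − r₁` on `[0,T⁺]`, then the operator
`L(u)(t) = u(t) − A⁻¹ F(u,t)` satisfies
`‖L(u₂)(t) − L(u₁)(t)‖ ≤ ‖A⁻¹‖ (f(r₂,t) − f(r₁,t))`. -/
theorem stmt_12
    {E₁ E₂ : Type*} [NormedAddCommGroup E₁] [NormedSpace ℝ E₁] [CompleteSpace E₁]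
    [NormedAddCommGroup E₂] [NormedSpace ℝ E₂] [CompleteSpace E₂]
    (Tp : ℝ) (hTp : 0 < Tp)
    (A : E₁ →L[ℝ] E₂) (Ainv : E₂ →L[ℝ] E₁)
    (hA₁ : ∀ x, Ainv (A x) = x) (hA₂ : ∀ y, A (Ainv y) = y)
    (F : C(Set.Icc (0:ℝ) Tp, E₁) → ℝ → E₂)
    -- Fréchet differentiability of `F` in `u`
    (F' : C(Set.Icc (0:ℝ) Tp, E₁) → ℝ → (C(Set.Icc (0:ℝ) Tp, E₁) →L[ℝ] E₂))
    (hFd : ∀ (u : C(Set.Icc (0:ℝ) Tp, E₁)) (t : Set.Icc (0:ℝ) Tp),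
      HasFDerivAt (fun v => F v (t : ℝ)) (F' u (t : ℝ)) u)
    (f f' : ℝ → ℝ → ℝ)
    (hfnn : ∀ r ≥ (0:ℝ), ∀ t ≥ (0:ℝ), 0 ≤ f r t ∧ 0 ≤ f' r t)
    (hfm : ∀ r₁ r₂ t₁ t₂ : ℝ, 0 ≤ r₁ → r₁ ≤ r₂ → 0 ≤ t₁ → t₁ ≤ t₂ →
      f r₁ t₁ ≤ f r₂ t₂ ∧ f' r₁ t₁ ≤ f' r₂ t₂)
    (hconv : ∀ t ≥ (0:ℝ), ConvexOn ℝ (Set.Ici 0) fun r => f r t)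
    -- `f'` is the partial derivative of `f` in `r`
    (hfd : ∀ t ≥ (0:ℝ), ∀ r ∈ Set.Ici (0:ℝ),
      HasDerivWithinAt (fun ρ => f ρ t) (f' r t) (Set.Ici 0) r)
    -- condition (E′), with the operator norm
    (condE' : ∀ (r : ℝ) (u : C(Set.Icc (0:ℝ) Tp, E₁)) (t : Set.Icc (0:ℝ) Tp),
      (∀ s : Set.Icc (0:ℝ) Tp, ‖u s‖ ≤ r) →
      ‖F' u (t : ℝ) - A.comp (ContinuousMap.evalCLM ℝ t)‖ ≤ f' r (t : ℝ)) :
    ∀ (r₁ r₂ : ℝ), 0 ≤ r₁ → r₁ ≤ r₂ →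
      ∀ u₁ u₂ : C(Set.Icc (0:ℝ) Tp, E₁),
        (∀ t : Set.Icc (0:ℝ) Tp, ‖u₁ t‖ ≤ r₁) →
        (∀ t : Set.Icc (0:ℝ) Tp, ‖u₂ t‖ ≤ r₂) →
        (∀ t : Set.Icc (0:ℝ) Tp, ‖u₂ t - u₁ t‖ ≤ r₂ - r₁) →
        ∀ t : Set.Icc (0:ℝ) Tp,
          ‖(u₂ t - Ainv (F u₂ (t : ℝ))) - (u₁ t - Ainv (F u₁ (t : ℝ)))‖ ≤
            ‖Ainv‖ * (f r₂ (t : ℝ) - f r₁ (t : ℝ)) := by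
  intro r₁ r₂ hr₁ hr₁₂ u₁ u₂ hu₁ hu₂ hu₁₂ t
  set tt : ℝ := (t : ℝ) with htt
  have ht0 : (0:ℝ) ≤ tt := t.2.1
  set w : C(Set.Icc (0:ℝ) Tp, E₁) := u₂ - u₁ with hwdef
  have hwnorm : ‖w‖ ≤ r₂ - r₁ := by
    have : Nonempty (Set.Icc (0:ℝ) Tp) := ⟨⟨0, le_refl 0, le_of_lt hTp⟩⟩
    rw [ContinuousMap.norm_le_of_nonempty]
    intro s
    simpa [hwdef] using hu₁₂ s
  set Φ : C(Set.Icc (0:ℝ) Tp, E₁) →L[ℝ] E₂ := A.comp (ContinuousMap.evalCLM ℝ t) with hΦ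
  set c : ℝ → C(Set.Icc (0:ℝ) Tp, E₁) := fun θ => u₁ + θ • w with hc
  set ℓ : ℝ → ℝ := fun θ => r₁ + θ * (r₂ - r₁) with hℓ
  set g : ℝ → E₂ := fun θ => (F (c θ) tt - Φ (c θ)) - (F (c 0) tt - Φ (c 0)) with hg
  set g' : ℝ → E₂ := fun θ => (F' (c θ) tt - Φ) w with hg'
  set B : ℝ → ℝ := fun θ => f (ℓ θ) tt - f (ℓ 0) tt with hB
  set B' : ℝ → ℝ := fun θ => f' (ℓ θ) tt * (r₂ - r₁) with hB'
  have hℓmem : ∀ θ : ℝ, 0 ≤ θ → 0 ≤ ℓ θ := fun θ hθ => by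
    have : 0 ≤ θ * (r₂ - r₁) := mul_nonneg hθ (by linarith)
    simp only [hℓ]; linarith
  have hcderiv : ∀ θ : ℝ, HasDerivAt c w θ := by
    intro θ
    simpa [hc] using ((hasDerivAt_id θ).smul_const w).const_add u₁
  have hgderiv : ∀ θ : ℝ, HasDerivAt g (g' θ) θ := by
    intro θ
    have h1 : HasFDerivAt (fun v => F v tt - Φ v) (F' (c θ) tt - Φ) (c θ) :=
      (hFd (c θ) t).sub Φ.hasFDerivAt
    have := h1.comp_hasDerivAt θ (hcderiv θ)
    exact this.sub_const (F (c 0) tt - Φ (c 0))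
  have hℓderiv : ∀ θ : ℝ, HasDerivAt ℓ (r₂ - r₁) θ := by
    intro θ
    simpa [hℓ] using ((hasDerivAt_id θ).mul_const (r₂ - r₁)).const_add r₁
  have hBderiv : ∀ θ ∈ Set.Ico (0:ℝ) 1, HasDerivWithinAt B (B' θ) (Set.Ici θ) θ := by
    intro θ hθ
    have hmaps : Set.MapsTo ℓ (Set.Ici θ) (Set.Ici 0) := fun x hx =>
      hℓmem x (le_trans hθ.1 hx)
    have h1 := (hfd tt ht0 (ℓ θ) (hℓmem θ hθ.1)).comp θ
      ((hℓderiv θ).hasDerivWithinAt) hmaps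
    exact h1.sub_const (f (ℓ 0) tt)
  have hcbound : ∀ θ ∈ Set.Icc (0:ℝ) 1, ∀ s : Set.Icc (0:ℝ) Tp, ‖(c θ) s‖ ≤ ℓ θ := by
    intro θ hθ s
    have heq : (c θ) s = (1 - θ) • u₁ s + θ • u₂ s := by
      simp only [hc, ContinuousMap.add_apply, ContinuousMap.smul_apply, hwdef,
        ContinuousMap.sub_apply, smul_sub, sub_smul, one_smul]
      abel
    rw [heq]
    calc ‖(1 - θ) • u₁ s + θ • u₂ s‖ ≤ ‖(1 - θ) • u₁ s‖ + ‖θ • u₂ s‖ := norm_add_le _ _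
      _ = (1 - θ) * ‖u₁ s‖ + θ * ‖u₂ s‖ := by
          rw [norm_smul, norm_smul, Real.norm_eq_abs, Real.norm_eq_abs,
            abs_of_nonneg (by linarith [hθ.2]), abs_of_nonneg hθ.1]
      _ ≤ (1 - θ) * r₁ + θ * r₂ := by
          gcongr
          · linarith [hθ.2]
          · exact hu₁ s
          · exact hθ.1
          · exact hu₂ s
      _ = ℓ θ := by simp only [hℓ]; ring
  have hbound : ∀ θ ∈ Set.Ico (0:ℝ) 1, ‖g' θ‖ ≤ B' θ := by
    intro θ hθ
    have hop : ‖F' (c θ) tt - Φ‖ ≤ f' (ℓ θ) tt :=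
      condE' (ℓ θ) (c θ) t (hcbound θ ⟨hθ.1, le_of_lt hθ.2⟩)
    calc ‖g' θ‖ ≤ ‖F' (c θ) tt - Φ‖ * ‖w‖ := (F' (c θ) tt - Φ).le_opNorm w
      _ ≤ f' (ℓ θ) tt * (r₂ - r₁) :=
          mul_le_mul hop hwnorm (norm_nonneg _)
            ((hfnn (ℓ θ) (hℓmem θ hθ.1) tt ht0).2)
  have hgcont : ContinuousOn g (Set.Icc 0 1) :=
    fun θ _ => ((hgderiv θ).continuousAt).continuousWithinAt
  have hBcont : ContinuousOn B (Set.Icc 0 1) := by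
    apply ContinuousOn.sub _ continuousOn_const
    have hfc : ContinuousOn (fun ρ => f ρ tt) (Set.Ici 0) :=
      fun r hr => (hfd tt ht0 r hr).continuousWithinAt
    exact hfc.comp ((continuous_const.add ((continuous_id).mul continuous_const)).continuousOn)
      (fun θ hθ => hℓmem θ hθ.1)
  have ha : ‖g 0‖ ≤ B 0 := by simp [hg, hB]
  have key : ‖g 1‖ ≤ B 1 :=
    image_norm_le_of_norm_deriv_right_le_deriv_boundary' hgcont
      (fun θ hθ => (hgderiv θ).hasDerivWithinAt) ha hBcont hBderiv hbound
      (Set.right_mem_Icc.mpr zero_le_one)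
  have hc1 : c 1 = u₂ := by simp [hc, hwdef]
  have hc0 : c 0 = u₁ := by simp [hc]
  have hg1 : g 1 = (F u₂ tt - A (u₂ t)) - (F u₁ tt - A (u₁ t)) := by
    simp [hg, hc1, hc0, hΦ, ContinuousMap.evalCLM]
  have hB1 : B 1 = f r₂ tt - f r₁ tt := by
    have h1 : ℓ 1 = r₂ := by simp [hℓ]
    have h0 : ℓ 0 = r₁ := by simp [hℓ]
    simp [hB, h1, h0]
  have hexpr : (u₂ t - Ainv (F u₂ tt)) - (u₁ t - Ainv (F u₁ tt)) = Ainv (-(g 1)) := by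
    rw [hg1]
    have h2 : Ainv (A (u₂ t)) = u₂ t := hA₁ _
    have h1 : Ainv (A (u₁ t)) = u₁ t := hA₁ _
    simp only [map_neg, map_sub]
    rw [h1, h2]
    abel
  rw [hexpr]
  calc ‖Ainv (-(g 1))‖ ≤ ‖Ainv‖ * ‖-(g 1)‖ := Ainv.le_opNorm _
    _ = ‖Ainv‖ * ‖g 1‖ := by rw [norm_neg]
    _ ≤ ‖Ainv‖ * (f r₂ tt - f r₁ tt) := by
        rw [← hB1]; exact mul_le_mul_of_nonneg_left key (norm_nonneg _)
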